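/- Let F : ℂ[X] → ℂ be a linear functional with F(1) = 1, and suppose there exists r > 0 such that F((X - α)^n) ≠ 0 for all n ≥ 1 and all α ∈ ℂ with |α| ≥ r. Then there exists w ∈ ℂ with |w| < r such that F(p) = p(w) for every polynomial p. -/

import Mathlib

open Polynomial Finset

-- lift multiset to function
lemma multiset_exists_fn (s : Multiset ℂ) : ∃ (n : ℕ) (f : Fin n → ℂ), (Finset.univ.val.map f) = s := by
  induction s using Quotient.inductionOn with
  | _ l =>
    refine ⟨l.length, l.get, ?_⟩
    show (Finset.univ.val.map l.get) = (l : Multiset ℂ)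
    have : (Finset.univ.val.map l.get) = ((List.finRange l.length).map l.get : Multiset ℂ) := by
      rfl
    rw [this, List.map_get_finRange]

lemma multiset_newton (s : Multiset ℂ) (k : ℕ) (hk : 0 < k) :
    (s.map (· ^ k)).sum = (-1)^(k+1) * k * s.esymm k -
      ∑ a ∈ (Finset.HasAntidiagonal.antidiagonal k).filter (fun a => a.1 ∈ Set.Ioo 0 k),
        (-1)^a.1 * s.esymm a.1 * (s.map (· ^ a.2)).sum := by
  obtain ⟨n, f, hf⟩ := multiset_exists_fn s
  have h := congrArg (MvPolynomial.aeval f) (MvPolynomial.psum_eq_mul_esymm_sub_sum (Fin n) ℂ k hk)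
  have hps : ∀ j : ℕ, MvPolynomial.aeval f (MvPolynomial.psum (Fin n) ℂ j) = (s.map (· ^ j)).sum := by
    intro j
    rw [MvPolynomial.psum, map_sum, ← hf, Multiset.map_map]
    simp [Finset.sum]
  simp only [map_sub, map_mul, map_pow, map_sum, map_neg, map_one, map_natCast,
    MvPolynomial.aeval_esymm_eq_multiset_esymm, hf, hps] at h
  exact h

lemma psum_congr (s t : Multiset ℂ) (K : ℕ)
    (hE : ∀ j, 0 < j → j ≤ K → s.esymm j = t.esymm j) :
    ∀ j, 0 < j → j ≤ K → (s.map (· ^ j)).sum = (t.map (· ^ j)).sum := by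
  intro j
  induction j using Nat.strong_induction_on with
  | _ j ih =>
    intro hj hjK
    rw [multiset_newton s j hj, multiset_newton t j hj, hE j hj hjK]
    congr 1
    refine Finset.sum_congr rfl fun a ha => ?_
    simp only [Finset.mem_filter, Finset.HasAntidiagonal.mem_antidiagonal, Set.mem_Ioo] at ha
    obtain ⟨hab, ha1, ha2⟩ := ha
    rw [hE a.1 ha1 (le_trans (le_of_lt ha2) hjK),
      ih a.2 (by omega) (by omega) (by omega)]

lemma esymm_key (s t : Multiset ℂ) (k : ℕ) (hk : 0 < k)
    (hE : ∀ j, 0 < j → j < k → s.esymm j = t.esymm j) :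
    (k : ℝ) * ‖s.esymm k - t.esymm k‖ = ‖(s.map (· ^ k)).sum - (t.map (· ^ k)).sum‖ := by
  have h1 : (s.map (· ^ k)).sum - (t.map (· ^ k)).sum
      = (-1)^(k+1) * k * (s.esymm k - t.esymm k) := by
    rw [multiset_newton s k hk, multiset_newton t k hk]
    have hsum : ∑ a ∈ (Finset.HasAntidiagonal.antidiagonal k).filter (fun a => a.1 ∈ Set.Ioo 0 k),
        (-1)^a.1 * s.esymm a.1 * (s.map (· ^ a.2)).sum
        = ∑ a ∈ (Finset.HasAntidiagonal.antidiagonal k).filter (fun a => a.1 ∈ Set.Ioo 0 k),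
        (-1)^a.1 * t.esymm a.1 * (t.map (· ^ a.2)).sum := by
      refine Finset.sum_congr rfl fun a ha => ?_
      simp only [Finset.mem_filter, Finset.HasAntidiagonal.mem_antidiagonal, Set.mem_Ioo] at ha
      obtain ⟨hab, ha1, ha2⟩ := ha
      rw [hE a.1 ha1 ha2, psum_congr s t (k-1)
        (fun j h1 h2 => hE j h1 (by omega)) a.2 (by omega) (by omega)]
    rw [hsum]; ring
  rw [h1]
  rw [norm_mul, norm_mul, norm_pow, norm_neg, norm_one, one_pow, one_mul,
    Complex.norm_natCast]

noncomputable def gkzT (c : ℕ → ℂ) (n : ℕ) : Polynomial ℂ :=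
  ∑ k ∈ Finset.range (n+1), C ((-1)^k * c k * (n.choose k)) * X^(n-k)

lemma gkzT_eval (F : Polynomial ℂ →ₗ[ℂ] ℂ) (n : ℕ) (α : ℂ) :
    eval α (gkzT (fun m => F (X^m)) n) = (-1)^n * F ((X - C α)^n) := by
  have hterm : ∀ m : ℕ, ((-1 : ℂ[X])^(m+n) * X^m * (C α)^(n-m) * (n.choose m : ℂ[X]))
      = ((-1 : ℂ)^(m+n) * α^(n-m) * (n.choose m : ℂ)) • (X^m : ℂ[X]) := by
    intro m
    rw [smul_eq_C_mul]
    push_cast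
    simp only [C_mul, C_pow, C_neg, C_1, map_natCast]
    ring
  rw [sub_pow]
  rw [map_sum]
  simp_rw [hterm, map_smul, smul_eq_mul]
  rw [Finset.mul_sum]
  unfold gkzT
  rw [eval_finset_sum]
  refine Finset.sum_congr rfl fun m hm => ?_
  rw [Finset.mem_range] at hm
  simp only [eval_mul, eval_C, eval_pow, eval_X]
  have hsign : (-1 : ℂ)^n * (-1)^(m+n) = (-1)^m := by
    rw [← pow_add]
    have h2 : n + (m + n) = m + 2*n := by omega
    rw [h2, pow_add, pow_mul]
    norm_num
  rw [show (-1 : ℂ)^n * ((-1)^(m+n) * α^(n-m) * (n.choose m : ℂ) * F (X^m))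
      = ((-1 : ℂ)^n * (-1)^(m+n)) * (α^(n-m) * (n.choose m : ℂ) * F (X^m)) from by ring, hsign]
  ring

lemma gkzT_monic (c : ℕ → ℂ) (hc0 : c 0 = 1) (n : ℕ) (hn : 0 < n) : (gkzT c n).Monic := by
  unfold gkzT
  rw [Finset.sum_range_succ']
  have h0 : C ((-1 : ℂ)^0 * c 0 * (n.choose 0)) * X^(n-0) = X^n := by
    simp [hc0]
  rw [h0, add_comm]
  apply monic_X_pow_add
  apply lt_of_le_of_lt (degree_sum_le _ _)
  rw [Finset.sup_lt_iff (by exact_mod_cast WithBot.bot_lt_coe n)]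
  intro k hk
  apply lt_of_le_of_lt (degree_C_mul_X_pow_le _ _)
  exact_mod_cast Nat.cast_lt.mpr (by omega : n - (k+1) < n)

lemma gkzT_natDegree (c : ℕ → ℂ) (hc0 : c 0 = 1) (n : ℕ) (hn : 0 < n) :
    (gkzT c n).natDegree = n := by
  have hdeg : (gkzT c n).degree = n := by
    unfold gkzT
    rw [Finset.sum_range_succ']
    have h0 : C ((-1 : ℂ)^0 * c 0 * (n.choose 0)) * X^(n-0) = X^n := by simp [hc0]
    rw [h0, add_comm]
    rw [degree_add_eq_left_of_degree_lt, degree_X_pow]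
    rw [degree_X_pow]
    apply lt_of_le_of_lt (degree_sum_le _ _)
    rw [Finset.sup_lt_iff (by exact_mod_cast WithBot.bot_lt_coe n)]
    intro k hk
    apply lt_of_le_of_lt (degree_C_mul_X_pow_le _ _)
    exact_mod_cast Nat.cast_lt.mpr (by omega : n - (k+1) < n)
  exact natDegree_eq_of_degree_eq_some hdeg

lemma gkzT_coeff (c : ℕ → ℂ) (n m : ℕ) (hm : m ≤ n) :
    (gkzT c n).coeff (n - m) = (-1)^m * c m * (n.choose m) := by
  unfold gkzT
  rw [finset_sum_coeff]
  rw [Finset.sum_eq_single m]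
  · rw [coeff_C_mul, coeff_X_pow, if_pos rfl, mul_one]
  · intro k hk hkm
    rw [Finset.mem_range] at hk
    rw [coeff_C_mul, coeff_X_pow, if_neg (by omega), mul_zero]
  · intro h
    exact absurd (Finset.mem_range.mpr (by omega)) h

-- esymm of replicate
lemma esymm_replicate (n m : ℕ) (hm : m ≤ n) (w : ℂ) :
    (Multiset.replicate n w).esymm m = w^m * (n.choose m) := by
  have hcard : Multiset.card (Multiset.replicate n w) = n := Multiset.card_replicate n w
  have h := Multiset.prod_X_sub_C_coeff (Multiset.replicate n w)
    (show n - m ≤ Multiset.card (Multiset.replicate n w) by omega)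
  rw [hcard] at h
  have hnm : n - (n - m) = m := by omega
  rw [hnm] at h
  have hprod : ((Multiset.replicate n w).map fun t => X - C t).prod = (X + C (-w))^n := by
    rw [Multiset.map_replicate, Multiset.prod_replicate, map_neg, sub_eq_add_neg]
  rw [hprod, coeff_X_add_C_pow, hnm, Nat.choose_symm hm] at h
  have hcancel : ((-1 : ℂ))^m * (w^m * (n.choose m)) = (-1)^m * (Multiset.replicate n w).esymm m := by
    rw [← h]
    rw [show ((-w : ℂ))^m = (-1)^m * w^m by rw [neg_pow]]
    ring
  exact (mul_left_cancel₀ (pow_ne_zero m (by norm_num : (-1 : ℂ) ≠ 0)) hcancel).symm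

-- power sum of replicate
lemma psum_replicate (n k : ℕ) (w : ℂ) :
    ((Multiset.replicate n w).map (· ^ k)).sum = n * w^k := by
  rw [Multiset.map_replicate, Multiset.sum_replicate, nsmul_eq_mul]

-- bound on power sums
lemma psum_bound (s : Multiset ℂ) (r : ℝ) (k : ℕ) (h : ∀ x ∈ s, ‖x‖ ≤ r) :
    ‖(s.map (· ^ k)).sum‖ ≤ (Multiset.card s : ℝ) * r^k := by
  refine le_trans (norm_multiset_sum_le _) ?_
  rw [Multiset.map_map]
  refine le_trans (Multiset.sum_le_card_nsmul _ (r^k) ?_) ?_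
  · intro x hx
    rw [Multiset.mem_map] at hx
    obtain ⟨y, hy, rfl⟩ := hx
    simp only [Function.comp_apply, norm_pow]
    exact pow_le_pow_left₀ (norm_nonneg y) (h y hy) k
  · rw [Multiset.card_map]
    simp [nsmul_eq_mul]

-- choose lower bound
lemma choose_lb (j m : ℕ) (h0 : 0 < j) (h : j ≤ m) : m + 1 - j ≤ m.choose j := by
  obtain ⟨j', rfl⟩ : ∃ j', j = j' + 1 := ⟨j - 1, by omega⟩
  induction m with
  | zero => omega
  | succ m ih =>
    rcases Nat.lt_or_ge m (j' + 1) with hlt | hge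
    · have : j' + 1 = m + 1 := by omega
      rw [this]
      simp
    · have h1 := ih (by omega)
      have h2 : (m+1).choose (j'+1) = m.choose j' + m.choose (j'+1) := Nat.choose_succ_succ m j'
      have h3 : 0 < m.choose j' := Nat.choose_pos (by omega)
      omega

/-- GKZ theorem for polynomials: a linear functional on ℂ[X] with F(1)=1 that is
nonzero on all powers (X-α)^n with |α| ≥ r is a point evaluation at some |w| < r. -/
theorem gkz_polynomials (F : Polynomial ℂ →ₗ[ℂ] ℂ) (hF1 : F 1 = 1)
    (r : ℝ) (hr : 0 < r)
    (hF : ∀ n : ℕ, 1 ≤ n → ∀ α : ℂ, r ≤ ‖α‖ → F ((X - C α) ^ n) ≠ 0) :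
    ∃ w : ℂ, ‖w‖ < r ∧ ∀ p : Polynomial ℂ, F p = p.eval w := by
  set c : ℕ → ℂ := fun m => F (X ^ m) with hc
  have hc0 : c 0 = 1 := by
    have : c 0 = F (X ^ 0) := congrFun hc 0
    rw [this, pow_zero, hF1]
  set w : ℂ := F X with hw
  have hc1 : c 1 = w := by
    have : c 1 = F (X ^ 1) := congrFun hc 1
    rw [this, pow_one, hw]
  have hCa : ∀ a : ℂ, F (Polynomial.C a) = a := by
    intro a
    have h1 : (Polynomial.C a : ℂ[X]) = a • 1 := by rw [smul_eq_C_mul, mul_one]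
    rw [h1, map_smul, hF1, smul_eq_mul, mul_one]
  have hwr : ‖w‖ < r := by
    by_contra hcon
    push_neg at hcon
    refine hF 1 le_rfl w hcon ?_
    rw [pow_one, map_sub, hCa, ← hw, sub_self]
  have key : ∀ k : ℕ, c k = w ^ k := by
    intro k
    induction k using Nat.strong_induction_on with
    | _ k ih =>
      match k, ih with
      | 0, _ => rw [hc0, pow_zero]
      | 1, _ => rw [hc1, pow_one]
      | (k'+2), ih =>
        set k := k' + 2 with hk
        by_contra hne
        set d := ‖c k - w ^ k‖ with hd'
        have hd : 0 < d := by
          rw [hd', norm_pos_iff]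
          exact sub_ne_zero.mpr hne
        obtain ⟨m, hm⟩ := exists_nat_gt (2 * r ^ k / d)
        set n := k + m + 1 with hn'
        have hn1 : 0 < n := by omega
        have hkn : k ≤ n := by omega
        -- facts about T n
        have hmonic := gkzT_monic c hc0 n hn1
        have hndeg := gkzT_natDegree c hc0 n hn1
        have hsplits : ((gkzT c n)).Splits := IsAlgClosed.splits _
        set s : Multiset ℂ := (gkzT c n).roots with hs'
        have hcard : Multiset.card s = n := by
          rw [hs', splits_iff_card_roots.mp hsplits, hndeg]
        have hroots_norm : ∀ β ∈ s, ‖β‖ < r := by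
          intro β hβ
          have hroot : eval β (gkzT c n) = 0 :=
            (mem_roots hmonic.ne_zero).mp hβ
          by_contra hcon
          push_neg at hcon
          refine hF n (by omega) β hcon ?_
          have hev := gkzT_eval F n β
          rw [← hc, hroot] at hev
          have h0 : ((-1 : ℂ))^n * F ((X - C β)^n) = 0 := hev.symm
          rcases mul_eq_zero.mp h0 with h | h
          · exact absurd h (pow_ne_zero n (by norm_num))
          · exact h
        have hesymm_s : ∀ j, j ≤ n → s.esymm j = c j * (n.choose j) := by
          intro j hj
          have hle : n - j ≤ (gkzT c n).natDegree := by rw [hndeg]; omega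
          have h := Polynomial.coeff_eq_esymm_roots_of_splits hsplits hle
          rw [hndeg, gkzT_coeff c n j hj, hmonic.leadingCoeff, one_mul,
            (show n - (n - j) = j by omega), ← hs'] at h
          have h2 : ((-1 : ℂ))^j * (c j * (n.choose j)) = (-1)^j * s.esymm j := by
            rw [← h]; ring
          exact (mul_left_cancel₀ (pow_ne_zero j (by norm_num : (-1:ℂ) ≠ 0)) h2).symm
        have hEeq : ∀ j, 0 < j → j < k → s.esymm j = (Multiset.replicate n w).esymm j := by
          intro j hj hjk
          rw [hesymm_s j (by omega), esymm_replicate n j (by omega) w, ih j hjk]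
        have hkey := esymm_key s (Multiset.replicate n w) k (by omega) hEeq
        have hdiff : s.esymm k - (Multiset.replicate n w).esymm k
            = (c k - w^k) * (n.choose k) := by
          rw [hesymm_s k hkn, esymm_replicate n k hkn w]; ring
        have hPs : ‖(s.map (· ^ k)).sum‖ ≤ (n : ℝ) * r^k := by
          have := psum_bound s r k (fun x hx => le_of_lt (hroots_norm x hx))
          rwa [hcard] at this
        have hPt : ‖((Multiset.replicate n w).map (· ^ k)).sum‖ ≤ (n : ℝ) * r^k := by
          rw [psum_replicate, norm_mul, norm_pow, Complex.norm_natCast]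
          have : ‖w‖^k ≤ r^k := pow_le_pow_left₀ (norm_nonneg w) (le_of_lt hwr) k
          exact mul_le_mul_of_nonneg_left this (Nat.cast_nonneg n)
        have hRHS : ‖(s.map (· ^ k)).sum - ((Multiset.replicate n w).map (· ^ k)).sum‖
            ≤ 2 * ((n : ℝ) * r^k) := by
          refine le_trans (norm_sub_le _ _) ?_
          linarith
        rw [hdiff] at hkey
        rw [norm_mul, Complex.norm_natCast, ← hd'] at hkey
        -- hkey : (k:ℝ) * (d * choose n k) = ‖Ps - Pt‖
        have hineq : (k : ℝ) * (d * (n.choose k : ℝ)) ≤ 2 * ((n : ℝ) * r^k) := by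
          rw [hkey]; exact hRHS
        -- binomial lower bound
        have hnat : n * ((n-1).choose (k-1)) = (n.choose k) * k := by
          have := Nat.add_one_mul_choose_eq (n-1) (k-1)
          rwa [(show n-1+1 = n by omega), (show k-1+1 = k by omega)] at this
        have hlb : n + 1 - k ≤ (n-1).choose (k-1) :=
          le_trans (by omega) (choose_lb (k-1) (n-1) (by omega) (by omega))
        have hchoose_lb : n * (n + 1 - k) ≤ k * (n.choose k) := by
          calc n * (n + 1 - k) ≤ n * ((n-1).choose (k-1)) :=
                Nat.mul_le_mul_left n hlb
            _ = k * (n.choose k) := by rw [hnat]; ring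
        -- combine: n * (n+1-k) * d ≤ k * choose * d ≤ 2 n r^k
        have hfinal : ((n : ℝ)) * ((n + 1 - k : ℕ) : ℝ) * d ≤ 2 * ((n : ℝ) * r^k) := by
          refine le_trans ?_ hineq
          have hcast : ((n : ℝ)) * ((n + 1 - k : ℕ) : ℝ) ≤ (k : ℝ) * (n.choose k : ℝ) := by
            exact_mod_cast hchoose_lb
          calc ((n : ℝ)) * ((n + 1 - k : ℕ) : ℝ) * d ≤ (k : ℝ) * (n.choose k : ℝ) * d :=
                mul_le_mul_of_nonneg_right hcast (le_of_lt hd)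
            _ = (k : ℝ) * (d * (n.choose k : ℝ)) := by ring
        -- get contradiction
        have hn_pos : (0 : ℝ) < n := by exact_mod_cast hn1
        have hdiv : ((n + 1 - k : ℕ) : ℝ) * d ≤ 2 * r^k := by
          have := (mul_le_mul_iff_right₀ hn_pos).mp (by linarith [hfinal] : (n:ℝ) * (((n + 1 - k : ℕ) : ℝ) * d) ≤ (n:ℝ) * (2 * r^k))
          exact this
        have hmk : ((n + 1 - k : ℕ) : ℝ) = (m : ℝ) + 2 := by
          rw [hn']; push_cast [show k + m + 1 + 1 - k = m + 2 by omega]; ring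
        rw [hmk] at hdiv
        have hm2 : 2 * r ^ k < (m : ℝ) * d := by
          rw [div_lt_iff₀ hd] at hm
          linarith
        nlinarith [hd]
  refine ⟨w, hwr, ?_⟩
  intro p
  induction p using Polynomial.induction_on' with
  | add p q hp hq => rw [map_add, eval_add, hp, hq]
  | monomial j a =>
    rw [← smul_X_eq_monomial, map_smul, smul_eq_mul]
    have hFX : F (X ^ j) = c j := (congrFun hc j).symm
    rw [hFX, key j, eval_smul, eval_pow, eval_X, smul_eq_mul]
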